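/- arXiv:1909.08298 — 3 statements merged into one kernel-verified Lean document; each statement's English description precedes it below -/
import Mathlib

section
/- Let Λ(ξ) = |ξ| - |ξ|³ and Φ₊₊(ξ,η) = -Λ(ξ) + Λ(ξ-η) + Λ(η). If ξ, η, ξ-η are nonzero and (ξ-η)·η < 0, then Φ₊₊(ξ,η) = -(1/2)·min(|ξ-η|,|η|)·(3|ξ|² + 3·max(|ξ-η|²,|η|²) + min(|ξ-η|²,|η|²) - 4). -/
noncomputable def Lam (ξ : ℝ) : ℝ := |ξ| - |ξ|^3

noncomputable def Phipp (ξ η : ℝ) : ℝ := -Lam ξ + Lam (ξ - η) + Lam η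

theorem phase_pp_neg (ξ η : ℝ) (hξ : ξ ≠ 0) (hη : η ≠ 0) (hne : ξ ≠ η)
    (h : (ξ - η) * η < 0) :
    Phipp ξ η = -(1/2) * min |ξ - η| |η| *
      (3 * |ξ|^2 + 3 * max (|ξ - η|^2) (|η|^2) + min (|ξ - η|^2) (|η|^2) - 4) := by
  have key : |ξ| = max |ξ - η| |η| - min |ξ - η| |η| := by
    rcases mul_neg_iff.mp h with ⟨ha, hb⟩ | ⟨ha, hb⟩
    · rw [abs_of_pos ha, abs_of_neg hb, max_sub_min_eq_abs]
      rw [show -η - (ξ - η) = -ξ by ring, abs_neg]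
    · rw [abs_of_neg ha, abs_of_pos hb, max_sub_min_eq_abs]
      rw [show η - -(ξ - η) = ξ by ring]
  unfold Phipp Lam
  rcases le_total |ξ - η| |η| with h1 | h1
  · have h2 : |ξ - η| ^ 2 ≤ |η| ^ 2 := by nlinarith [abs_nonneg (ξ - η), abs_nonneg η]
    rw [min_eq_left h1, min_eq_left h2, max_eq_right h2, key,
      min_eq_left h1, max_eq_right h1]
    ring
  · have h2 : |η| ^ 2 ≤ |ξ - η| ^ 2 := by nlinarith [abs_nonneg (ξ - η), abs_nonneg η]
    rw [min_eq_right h1, min_eq_right h2, max_eq_left h2, key,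
      min_eq_right h1, max_eq_left h1]
    ring
end

section
/- Let Λ(ξ) = |ξ| - |ξ|³ and Φ₋₋(ξ,η) = -Λ(ξ) - Λ(ξ-η) - Λ(η). If ξ, η, ξ-η are nonzero and (ξ-η)·η < 0, then Φ₋₋(ξ,η) = (1/2)·max(|ξ-η|,|η|)·(3|ξ|² + 3·min(|ξ-η|²,|η|²) + max(|ξ-η|²,|η|²) - 4). -/
noncomputable def Phimm (ξ η : ℝ) : ℝ := -Lam ξ - Lam (ξ - η) - Lam η

theorem phase_mm_neg (ξ η : ℝ) (hξ : ξ ≠ 0) (hη : η ≠ 0) (hne : ξ ≠ η)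
    (h : (ξ - η) * η < 0) :
    Phimm ξ η = (1/2) * max |ξ - η| |η| *
      (3 * |ξ|^2 + 3 * min (|ξ - η|^2) (|η|^2) + max (|ξ - η|^2) (|η|^2) - 4) := by
  have hsub : ξ - η ≠ 0 := sub_ne_zero.mpr hne
  unfold Phimm Lam
  rcases lt_or_gt_of_ne hsub with ha | ha <;> rcases lt_or_gt_of_ne hη with hb | hb
  · nlinarith [mul_pos_of_neg_of_neg ha hb]
  · rcases le_total ξ 0 with hx | hx
    · have h1 : |η| ≤ |ξ - η| := by
        rw [abs_of_neg ha, abs_of_pos hb]; linarith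
      rw [max_eq_left h1, min_eq_right (pow_le_pow_left₀ (abs_nonneg _) h1 2),
        max_eq_left (pow_le_pow_left₀ (abs_nonneg _) h1 2),
        abs_of_neg ha, abs_of_pos hb, abs_of_nonpos hx]
      ring
    · have h1 : |ξ - η| ≤ |η| := by
        rw [abs_of_neg ha, abs_of_pos hb]; linarith
      rw [max_eq_right h1, min_eq_left (pow_le_pow_left₀ (abs_nonneg _) h1 2),
        max_eq_right (pow_le_pow_left₀ (abs_nonneg _) h1 2),
        abs_of_neg ha, abs_of_pos hb, abs_of_nonneg hx]
      ring
  · rcases le_total ξ 0 with hx | hx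
    · have h1 : |ξ - η| ≤ |η| := by
        rw [abs_of_pos ha, abs_of_neg hb]; linarith
      rw [max_eq_right h1, min_eq_left (pow_le_pow_left₀ (abs_nonneg _) h1 2),
        max_eq_right (pow_le_pow_left₀ (abs_nonneg _) h1 2),
        abs_of_pos ha, abs_of_neg hb, abs_of_nonpos hx]
      ring
    · have h1 : |η| ≤ |ξ - η| := by
        rw [abs_of_pos ha, abs_of_neg hb]; linarith
      rw [max_eq_left h1, min_eq_right (pow_le_pow_left₀ (abs_nonneg _) h1 2),
        max_eq_left (pow_le_pow_left₀ (abs_nonneg _) h1 2),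
        abs_of_pos ha, abs_of_neg hb, abs_of_nonneg hx]
      ring
  · nlinarith [mul_pos ha hb]
end

section
/- Let Λ_ε(ξ) = |ξ| - ε|ξ|³ for ε > 0 and Φᵉ₊₋(ξ,η) = -Λ_ε(ξ) + Λ_ε(ξ-η) - Λ_ε(η). If ξ, η, ξ-η are nonzero and ξ·η > 0, then Φᵉ₊₋(ξ,η) = (1/2)·min(|ξ|,|η|)·(3ε|ξ-η|² + 3ε·max(|ξ|²,|η|²) + ε·min(|ξ|²,|η|²) - 4). -/
noncomputable def LamE (ε ξ : ℝ) : ℝ := |ξ| - ε * |ξ|^3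

noncomputable def PhiEpm (ε ξ η : ℝ) : ℝ := -LamE ε ξ + LamE ε (ξ - η) - LamE ε η

theorem phaseE_pm_pos (ε ξ η : ℝ) (hε : 0 < ε) (hξ : ξ ≠ 0) (hη : η ≠ 0)
    (hne : ξ ≠ η) (h : ξ * η > 0) :
    PhiEpm ε ξ η = (1/2) * min |ξ| |η| *
      (3 * ε * |ξ - η|^2 + 3 * ε * max (|ξ|^2) (|η|^2) + ε * min (|ξ|^2) (|η|^2) - 4) := by
  unfold PhiEpm LamE
  rcases mul_pos_iff.mp h with ⟨hξp, hηp⟩ | ⟨hξn, hηn⟩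
  · rcases le_total ξ η with hle | hle
    · rw [abs_of_pos hξp, abs_of_pos hηp, abs_of_nonpos (by linarith : ξ - η ≤ 0),
        min_eq_left hle, min_eq_left (by nlinarith : ξ^2 ≤ η^2),
        max_eq_right (by nlinarith : ξ^2 ≤ η^2)]
      ring
    · rw [abs_of_pos hξp, abs_of_pos hηp, abs_of_nonneg (by linarith : 0 ≤ ξ - η),
        min_eq_right hle, min_eq_right (by nlinarith : η^2 ≤ ξ^2),
        max_eq_left (by nlinarith : η^2 ≤ ξ^2)]
      ring
  · rcases le_total ξ η with hle | hle
    · rw [abs_of_neg hξn, abs_of_neg hηn, abs_of_nonpos (by linarith : ξ - η ≤ 0),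
        min_eq_right (by linarith : -η ≤ -ξ), min_eq_right (by nlinarith : (-η)^2 ≤ (-ξ)^2),
        max_eq_left (by nlinarith : (-η)^2 ≤ (-ξ)^2)]
      ring
    · rw [abs_of_neg hξn, abs_of_neg hηn, abs_of_nonneg (by linarith : 0 ≤ ξ - η),
        min_eq_left (by linarith : -ξ ≤ -η), min_eq_left (by nlinarith : (-ξ)^2 ≤ (-η)^2),
        max_eq_right (by nlinarith : (-ξ)^2 ≤ (-η)^2)]
      ring
end
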